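/- Let F_full = {f_a : a ∈ {0,1}^ℕ} be the autoregressive class with f_a(x) = a_{|x|+1} if x is a prefix of a, else 0, and let f_a^{e2e,T}(x) denote the final bit after T autoregressive steps starting from x. Then the set {0, 00, ..., 0^T} of size T is shattered by F_full^{e2e,T}: for every labeling y ∈ {0,1}^T of these strings there is a sequence a (beginning with 0^T followed by arbitrary bits) with f_a^{e2e,T}(0^t) = y_t for all 1 ≤ t ≤ T. -/
import Mathlib


/-- The autoregressive next-bit predictor indexed by the infinite sequence `a`. -/
def fa (a : ℕ → Bool) (x : List Bool) : Bool :=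
  if x = List.ofFn (fun i : Fin x.length => a i) then a x.length else false

/-- One autoregressive step: append the generated bit. -/
def arStep (f : List Bool → Bool) (x : List Bool) : List Bool := x ++ [f x]

/-- The end-to-end output: the last bit after `T` autoregressive steps. -/
def e2e (f : List Bool → Bool) (T : ℕ) (x : List Bool) : Bool :=
  ((arStep f)^[T] x).getLastD false

lemma fa_ofFn (a : ℕ → Bool) (n : ℕ) :
    fa a (List.ofFn fun i : Fin n => a i) = a n := by
  unfold fa
  rw [if_pos]
  · simp
  · apply List.ext_getElem <;> simp

lemma arStep_ofFn (a : ℕ → Bool) (n : ℕ) :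
    arStep (fa a) (List.ofFn fun i : Fin n => a i) =
      List.ofFn fun i : Fin (n+1) => a i := by
  rw [arStep, fa_ofFn, List.ofFn_succ']
  simp [List.concat_eq_append]

lemma iter_ofFn (a : ℕ → Bool) (n k : ℕ) :
    (arStep (fa a))^[k] (List.ofFn fun i : Fin n => a i) =
      List.ofFn fun i : Fin (n+k) => a i := by
  induction k with
  | zero => rfl
  | succ k ih => rw [Function.iterate_succ_apply', ih, arStep_ofFn, ← Nat.add_assoc]

/-- The chain `0, 00, …, 0^T` is shattered by `F_full^{e2e,T}`: every labeling
`y : Fin T → Bool` is realized by some `f_a` whose sequence `a` begins with `0^T`. -/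
theorem stmt_15 (T : ℕ) (hT : 1 ≤ T) (y : Fin T → Bool) :
    ∃ a : ℕ → Bool, (∀ i : ℕ, i < T → a i = false) ∧
      ∀ t : Fin T, e2e (fa a) T (List.replicate (t.val + 1) false) = y t := by
  classical
  refine ⟨fun i => if h : i - T < T ∧ T ≤ i then y ⟨i - T, h.1⟩ else false, ?_, ?_⟩
  · intro i hi
    simp [Nat.not_le.mpr hi]
  · intro t
    set a : ℕ → Bool := fun i => if h : i - T < T ∧ T ≤ i then y ⟨i - T, h.1⟩ else false with ha
    have hrep : List.replicate (t.val + 1) false = List.ofFn fun i : Fin (t.val + 1) => a i := by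
      apply List.ext_getElem
      · simp
      · intro i hi hi'
        have hle : ¬ T ≤ i := by
          simp at hi
          omega
        rw [List.getElem_replicate, List.getElem_ofFn]
        simp [ha, hle]
    rw [e2e, hrep, iter_ofFn]
    rw [List.getLastD_eq_getLast?]
    have : (List.ofFn fun i : Fin (t.val + 1 + T) => a i).getLast? = some (a (t.val + T)) := by
      rw [List.getLast?_eq_getElem?]
      simp
    rw [this]
    have ht : t.val + T - T < T ∧ T ≤ t.val + T := ⟨by omega, by omega⟩
    simp only [Option.getD_some, ha, dif_pos ht]
    congr
    omega
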